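/- In the ring R = 𝔽₂[b₁, b₂, c₃, c₄, …][ρ, x₁, x₂, w]/(x₂² + x₁²b₁), the element x₁³w is a regular element (nonzerodivisor): for every r ∈ R, r·x₁³w = 0 implies r = 0. -/

import Mathlib

/-!
STATEMENT 15: In `R = 𝔽₂[b₁, b₂, c₃, c₄, …][ρ, x₁, x₂, w]/(x₂² + x₁²b₁)`, the element
`x₁³w` is a nonzerodivisor.

We model the ambient polynomial ring with variable set `ℕ ⊕ Fin 4` (`Sum.inl 0, 1 =
b₁, b₂`, `Sum.inl (k+2) = c_{k+3}`; `Sum.inr 0,…,3 = ρ, x₁, x₂, w`).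
-/

open MvPolynomial

set_option synthInstance.maxHeartbeats 1000000
set_option maxHeartbeats 1000000

noncomputable section

namespace Stmt15

abbrev P := MvPolynomial (ℕ ⊕ Fin 4) (ZMod 2)

def b₁ : P := X (Sum.inl 0)
def b₂ : P := X (Sum.inl 1)
def c (k : ℕ) : P := X (Sum.inl (k + 2))   -- `c k` is `c_{k+3}`
def ρ : P := X (Sum.inr 0)
def x₁ : P := X (Sum.inr 1)
def x₂ : P := X (Sum.inr 2)
def w : P := X (Sum.inr 3)

def J : Ideal P := Ideal.span {x₂ ^ 2 + x₁ ^ 2 * b₁}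

abbrev R := P ⧸ J

def mk : P →+* R := Ideal.Quotient.mk J

/-! Auxiliary setup: identify `P` with `A[X]` where `A` omits the variable `x₂`,
so that `R ≅ AdjoinRoot (X² + C (x₁² b₁))`, a free `A`-module. -/

abbrev A := MvPolynomial (ℕ ⊕ Fin 3) (ZMod 2)

def σe : (ℕ ⊕ Fin 4) ≃ Option (ℕ ⊕ Fin 3) where
  toFun s := match s with
    | Sum.inl n => some (Sum.inl n)
    | Sum.inr 0 => some (Sum.inr 0)
    | Sum.inr 1 => some (Sum.inr 1)
    | Sum.inr 2 => none
    | Sum.inr 3 => some (Sum.inr 2)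
  invFun o := match o with
    | none => Sum.inr 2
    | some (Sum.inl n) => Sum.inl n
    | some (Sum.inr 0) => Sum.inr 0
    | some (Sum.inr 1) => Sum.inr 1
    | some (Sum.inr 2) => Sum.inr 3
  left_inv s := by rcases s with n | i <;> [rfl; (fin_cases i <;> rfl)]
  right_inv o := by
    rcases o with _ | (n | i)
    · rfl
    · rfl
    · fin_cases i <;> rfl

def E : P ≃ₐ[ZMod 2] Polynomial A :=
  (renameEquiv (ZMod 2) σe).trans (optionEquivLeft (ZMod 2) (ℕ ⊕ Fin 3))

def a : A := X (Sum.inr 1) ^ 2 * X (Sum.inl 0)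
def f : Polynomial A := Polynomial.X ^ 2 + Polynomial.C a

lemma E_gen : E (x₂ ^ 2 + x₁ ^ 2 * b₁) = f := by
  simp [E, x₂, x₁, b₁, σe, optionEquivLeft, f, a]

def m : A := X (Sum.inr 1) ^ 3 * X (Sum.inr 2)

lemma E_m : E (x₁ ^ 3 * w) = Polynomial.C m := by
  simp [E, x₁, w, σe, optionEquivLeft, m]

lemma f_monic : f.Monic := by
  have : (Polynomial.C a).degree < (Polynomial.X ^ 2 : Polynomial A).degree := by
    apply lt_of_le_of_lt (Polynomial.degree_C_le)
    simp [Polynomial.degree_X_pow]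
  simpa [f] using (Polynomial.monic_X_pow (R := A) 2).add_of_left this

lemma map_J : Ideal.span {f} = J.map ((E : P ≃+* Polynomial A) : P →+* Polynomial A) := by
  rw [J, Ideal.map_span]
  simp [Set.image_singleton, E_gen]

def Φ : R ≃+* AdjoinRoot f :=
  Ideal.quotientEquiv J (Ideal.span {f}) (E : P ≃+* Polynomial A) map_J

lemma Φ_mk (p : P) : Φ (mk p) = AdjoinRoot.mk f (E p) := rfl

theorem stmt_15 :
    ∀ r : R, r * mk (x₁ ^ 3 * w) = 0 → r = 0 := by
  intro r hr
  have hfree : Module.Free A (AdjoinRoot f) :=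
    Module.Free.of_basis (AdjoinRoot.powerBasis' f_monic).basis
  haveI := hfree
  haveI : NoZeroSMulDivisors A (AdjoinRoot f) :=
    ⟨fun {c x} h => Module.isTorsionFree_iff_smul_eq_zero.mp inferInstance c x h⟩
  have h2 : Φ r * AdjoinRoot.mk f (Polynomial.C m) = 0 := by
    have := congrArg Φ hr
    rw [map_mul, map_zero] at this
    rwa [Φ_mk, E_m] at this
  have h3 : m • Φ r = 0 := by
    rw [Algebra.smul_def, AdjoinRoot.algebraMap_eq]
    rw [mul_comm]
    exact h2
  have hm : m ≠ 0 :=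
    mul_ne_zero (pow_ne_zero _ (MvPolynomial.X_ne_zero _)) (MvPolynomial.X_ne_zero _)
  rcases smul_eq_zero.mp h3 with h | h
  · exact absurd h hm
  · exact Φ.injective (by simpa using h)

end Stmt15

end
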